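/- Let f̂ be any measurable regressor with E[(f̂(X)−Y)²] < ∞, let R̂(f̂,·) : 𝒳 → ℝ be any measurable calibrator with E[|R̂(f̂,X) − R(f̂,X)|] < ∞, and let r_{R̂}(x) = 1{R̂(f̂,x) ≤ c}. Let f* = f̄ and r*(x) = 1{R(f*,x) ≤ c}, and write L*_RwR = L_RwR(f*, r*). Then the excess RwR risk decomposes as L_RwR(f̂, r_{R̂}) − L*_RwR ≤ E[(f̂(X) − f*(X))²] + E[|R̂(f̂,X) − R(f̂,X)|], i.e., it is bounded by the prediction error plus the calibration error. -/

import Mathlib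

open MeasureTheory Filter

noncomputable section

private lemma integrable_of_sq {Ω : Type*} [MeasurableSpace Ω] {μ : Measure Ω}
    [IsFiniteMeasure μ] {g : Ω → ℝ} (hg : AEStronglyMeasurable g μ)
    (h2 : Integrable (fun ω => g ω ^ 2) μ) : Integrable g μ := by
  refine (h2.add (integrable_const 1)).mono' hg (ae_of_all _ fun ω => ?_)
  simp only [Real.norm_eq_abs, Pi.add_apply]
  nlinarith [abs_nonneg (g ω), sq_nonneg (|g ω| - 1), sq_abs (g ω)]

private lemma pointwise_rwr_ineq {A B S c : ℝ} (hSA : S ≤ A) :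
    ((if B ≤ c then (1 : ℝ) else 0) * A + (1 - if B ≤ c then (1 : ℝ) else 0) * c)
      - ((if S ≤ c then (1 : ℝ) else 0) * S + (1 - if S ≤ c then (1 : ℝ) else 0) * c)
      ≤ (A - S) + |B - A| := by
  have h1 : B - A ≤ |B - A| := le_abs_self _
  have h2 : A - B ≤ |B - A| := by rw [abs_sub_comm]; exact le_abs_self _
  have h0 : (0 : ℝ) ≤ |B - A| := abs_nonneg _
  split_ifs with hB hS hS <;> nlinarith

/-- The regression-with-rejection (RwR) loss
`L_RwR(f,r) = E[ r(X)·(f(X)−Y)² + (1−r(X))·c ]`. -/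
def LRwR {Ω : Type*} [MeasurableSpace Ω] {d : ℕ} (μ : Measure Ω)
    (X : Ω → EuclideanSpace ℝ (Fin d)) (Y : Ω → ℝ) (c : ℝ)
    (f r : EuclideanSpace ℝ (Fin d) → ℝ) : ℝ :=
  ∫ ω, r (X ω) * (f (X ω) - Y ω) ^ 2 + (1 - r (X ω)) * c ∂μ

/-- `g : 𝒳 → ℝ` is a measurable version of the conditional expectation
`E[Z | X]`, i.e. `g(X) = E[Z | σ(X)]` a.s. -/
def IsCondMean {Ω : Type*} [MeasurableSpace Ω] {d : ℕ} (μ : Measure Ω)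
    (X : Ω → EuclideanSpace ℝ (Fin d)) (Z : Ω → ℝ)
    (g : EuclideanSpace ℝ (Fin d) → ℝ) : Prop :=
  (fun ω => g (X ω)) =ᵐ[μ] μ[Z | MeasurableSpace.comap X inferInstance]

/-- the excess RwR risk of `(f̂, r_{R̂})` over the optimal pair
`(f*, r*)` is bounded by the prediction error plus the calibration error. -/
theorem stmt13 {Ω : Type*} [MeasurableSpace Ω] {d : ℕ}
    (μ : Measure Ω) [IsProbabilityMeasure μ]
    (X : Ω → EuclideanSpace ℝ (Fin d)) (Y : Ω → ℝ)
    (hX : Measurable X) (hY : Measurable Y)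
    (hY2 : Integrable (fun ω => (Y ω) ^ 2) μ)
    (c : ℝ) (hc : 0 < c)
    (fstar : EuclideanSpace ℝ (Fin d) → ℝ) (hfstar_m : Measurable fstar)
    (hfstar : IsCondMean μ X Y fstar)
    (hfstar2 : Integrable (fun ω => (fstar (X ω) - Y ω) ^ 2) μ)
    (Rstar : EuclideanSpace ℝ (Fin d) → ℝ) (hRstar_m : Measurable Rstar)
    (hRstar : IsCondMean μ X (fun ω => (fstar (X ω) - Y ω) ^ 2) Rstar)
    (fhat : EuclideanSpace ℝ (Fin d) → ℝ) (hfhat : Measurable fhat)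
    (hfhat2 : Integrable (fun ω => (fhat (X ω) - Y ω) ^ 2) μ)
    (hdiff2 : Integrable (fun ω => (fhat (X ω) - fstar (X ω)) ^ 2) μ)
    (Rfhat : EuclideanSpace ℝ (Fin d) → ℝ) (hRfhat_m : Measurable Rfhat)
    (hRfhat : IsCondMean μ X (fun ω => (fhat (X ω) - Y ω) ^ 2) Rfhat)
    (Rhat : EuclideanSpace ℝ (Fin d) → ℝ) (hRhat_m : Measurable Rhat)
    (hcal : Integrable (fun ω => |Rhat (X ω) - Rfhat (X ω)|) μ) :
    LRwR μ X Y c fhat (fun x => if Rhat x ≤ c then 1 else 0)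
        - LRwR μ X Y c fstar (fun x => if Rstar x ≤ c then 1 else 0)
      ≤ (∫ ω, (fhat (X ω) - fstar (X ω)) ^ 2 ∂μ)
        + ∫ ω, |Rhat (X ω) - Rfhat (X ω)| ∂μ := by
  classical
  have hm := hX.comap_le
  haveI : SigmaFinite (μ.trim hm) := inferInstance
  have hXm : Measurable[MeasurableSpace.comap X inferInstance] X := fun s hs => ⟨s, hs, rfl⟩
  -- abbreviations
  set rh : EuclideanSpace ℝ (Fin d) → ℝ := fun x => if Rhat x ≤ c then 1 else 0 with hrh_def
  set rs : EuclideanSpace ℝ (Fin d) → ℝ := fun x => if Rstar x ≤ c then 1 else 0 with hrs_def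
  have hrh_m : Measurable rh := Measurable.ite (measurableSet_le hRhat_m measurable_const)
    measurable_const measurable_const
  have hrs_m : Measurable rs := Measurable.ite (measurableSet_le hRstar_m measurable_const)
    measurable_const measurable_const
  set Zf : Ω → ℝ := fun ω => (fhat (X ω) - Y ω) ^ 2 with hZf_def
  set Zs : Ω → ℝ := fun ω => (fstar (X ω) - Y ω) ^ 2 with hZs_def
  set D : Ω → ℝ := fun ω => fhat (X ω) - fstar (X ω) with hD_def
  set W : Ω → ℝ := fun ω => fstar (X ω) - Y ω with hW_def
  -- basic integrabilities
  have hWm : AEStronglyMeasurable W μ :=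
    (((hfstar_m.comp hX).sub hY).aestronglyMeasurable)
  have hDm : AEStronglyMeasurable D μ :=
    (((hfhat.comp hX).sub (hfstar_m.comp hX)).aestronglyMeasurable)
  have hWint : Integrable W μ := integrable_of_sq hWm hfstar2
  have hYint : Integrable Y μ := integrable_of_sq hY.aestronglyMeasurable hY2
  have hfsXint : Integrable (fun ω => fstar (X ω)) μ := by
    have : (fun ω => fstar (X ω)) = fun ω => W ω + Y ω := by funext ω; simp [hW_def]
    rw [this]; exact hWint.add hYint
  have hDWint : Integrable (fun ω => D ω * W ω) μ := by
    refine (hdiff2.add hfstar2).mono' (hDm.mul hWm) (ae_of_all _ fun ω => ?_)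
    simp only [Real.norm_eq_abs, abs_mul, Pi.add_apply]
    show |D ω| * |W ω| ≤ D ω ^ 2 + W ω ^ 2
    nlinarith [sq_nonneg (|D ω| - |W ω|), sq_abs (D ω), sq_abs (W ω), abs_nonneg (D ω),
      abs_nonneg (W ω)]
  -- conditional expectation facts
  have hfstar' : (fun ω => fstar (X ω)) =ᵐ[μ] μ[Y|MeasurableSpace.comap X inferInstance] := hfstar
  have hRfhat' : (fun ω => Rfhat (X ω)) =ᵐ[μ] μ[Zf|MeasurableSpace.comap X inferInstance] := hRfhat
  have hRstar' : (fun ω => Rstar (X ω)) =ᵐ[μ] μ[Zs|MeasurableSpace.comap X inferInstance] := hRstar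
  have hfsm : StronglyMeasurable[MeasurableSpace.comap X inferInstance] (fun ω => fstar (X ω)) :=
    (hfstar_m.comp hXm).stronglyMeasurable
  have hDsm : StronglyMeasurable[MeasurableSpace.comap X inferInstance] D :=
    ((hfhat.comp hXm).sub (hfstar_m.comp hXm)).stronglyMeasurable
  set P : Ω → ℝ := fun ω => D ω ^ 2 with hP_def
  set Q : Ω → ℝ := fun ω => D ω * W ω with hQ_def
  have hW0 : μ[W|MeasurableSpace.comap X inferInstance] =ᵐ[μ] 0 := by
    have h2 : μ[(fun ω => fstar (X ω))|MeasurableSpace.comap X inferInstance] = fun ω => fstar (X ω) :=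
      condExp_of_stronglyMeasurable hm hfsm hfsXint
    have h1 : μ[W|MeasurableSpace.comap X inferInstance] =ᵐ[μ]
        μ[(fun ω => fstar (X ω))|MeasurableSpace.comap X inferInstance] - μ[Y|MeasurableSpace.comap X inferInstance] := by
      exact condExp_sub hfsXint hYint _
    filter_upwards [h1, hfstar'] with ω e1 e3
    have h2' := congrFun h2 ω
    simp only [Pi.sub_apply, Pi.zero_apply] at *
    rw [e1, h2', ← e3]; ring
  have hDW0 : μ[Q|MeasurableSpace.comap X inferInstance] =ᵐ[μ] 0 := by
    have h1 : μ[Q|MeasurableSpace.comap X inferInstance] =ᵐ[μ] fun ω => D ω * (μ[W|MeasurableSpace.comap X inferInstance]) ω := by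
      exact condExp_mul_of_stronglyMeasurable_left hDsm (by exact hDWint) hWint
    filter_upwards [h1, hW0] with ω e1 e2
    simp only [Pi.zero_apply] at *
    rw [e1, e2, mul_zero]
  have hZf_split : Zf = fun ω => Zs ω + (P ω + (Q ω + Q ω)) := by
    funext ω; simp only [hZf_def, hZs_def, hP_def, hQ_def, hD_def, hW_def]; ring
  have hQQint : Integrable (fun ω => Q ω + Q ω) μ := by exact hDWint.add hDWint
  have hPQQint : Integrable (fun ω => P ω + (Q ω + Q ω)) μ := by exact hdiff2.add hQQint
  have c1 : μ[(fun ω => Zs ω + (P ω + (Q ω + Q ω)))|MeasurableSpace.comap X inferInstance] =ᵐ[μ]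
      μ[Zs|MeasurableSpace.comap X inferInstance] + μ[(fun ω => P ω + (Q ω + Q ω))|MeasurableSpace.comap X inferInstance] := by
    exact condExp_add hfstar2 hPQQint _
  have c2 : μ[(fun ω => P ω + (Q ω + Q ω))|MeasurableSpace.comap X inferInstance] =ᵐ[μ]
      μ[P|MeasurableSpace.comap X inferInstance] + μ[(fun ω => Q ω + Q ω)|MeasurableSpace.comap X inferInstance] := by
    exact condExp_add (by exact hdiff2) hQQint _
  have c3 : μ[(fun ω => Q ω + Q ω)|MeasurableSpace.comap X inferInstance] =ᵐ[μ]
      μ[Q|MeasurableSpace.comap X inferInstance] + μ[Q|MeasurableSpace.comap X inferInstance] := by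
    exact condExp_add hDWint hDWint _
  have hD2nn : 0 ≤ᵐ[μ] μ[P|MeasurableSpace.comap X inferInstance] :=
    condExp_nonneg (ae_of_all _ fun ω => sq_nonneg (D ω))
  have hRfhatS := hRfhat'
  rw [hZf_split] at hRfhatS
  have hdiffeq : (fun ω => Rfhat (X ω) - Rstar (X ω)) =ᵐ[μ] μ[P|MeasurableSpace.comap X inferInstance] := by
    filter_upwards [hRfhatS, hRstar', c1, c2, c3, hDW0] with ω e1 e2 f1 f2 f3 e4
    simp only [Pi.add_apply, Pi.zero_apply] at *
    rw [e1, e2, f1, f2, f3, e4]; ring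
  have hle : ∀ᵐ ω ∂μ, Rstar (X ω) ≤ Rfhat (X ω) := by
    filter_upwards [hdiffeq, hD2nn] with ω e1 e2
    simp only [Pi.zero_apply] at e2
    rw [← e1] at e2
    linarith
  have hRfXint : Integrable (fun ω => Rfhat (X ω)) μ := integrable_condExp.congr hRfhat'.symm
  have hRsXint : Integrable (fun ω => Rstar (X ω)) μ := integrable_condExp.congr hRstar'.symm
  have hint_diff : ∫ ω, (Rfhat (X ω) - Rstar (X ω)) ∂μ = ∫ ω, P ω ∂μ := by
    rw [integral_congr_ae hdiffeq, integral_condExp hm]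
  -- rejector boundedness
  have hrh01 : ∀ x, rh x = 0 ∨ rh x = 1 := fun x => by
    simp only [hrh_def]; split_ifs <;> simp
  have hrs01 : ∀ x, rs x = 0 ∨ rs x = 1 := fun x => by
    simp only [hrs_def]; split_ifs <;> simp
  -- step: ∫ r(X) * Z = ∫ r(X) * R(X) for conditional mean R
  have key : ∀ (r : EuclideanSpace ℝ (Fin d) → ℝ) (hr : Measurable r)
      (hr01 : ∀ x, r x = 0 ∨ r x = 1) (Z : Ω → ℝ) (hZ : Integrable Z μ)
      (R : EuclideanSpace ℝ (Fin d) → ℝ) (hR : (fun ω => R (X ω)) =ᵐ[μ] μ[Z|MeasurableSpace.comap X inferInstance]),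
      ∫ ω, r (X ω) * Z ω ∂μ = ∫ ω, r (X ω) * R (X ω) ∂μ := by
    intro r hr hr01 Z hZ R hR
    have hrXint : Integrable (fun ω => r (X ω) * Z ω) μ := by
      refine hZ.abs.mono' ((hr.comp hX).aestronglyMeasurable.mul hZ.1) (ae_of_all _ fun ω => ?_)
      simp only [Real.norm_eq_abs, abs_mul]
      rcases hr01 (X ω) with h | h <;> simp [h, abs_nonneg]
    have hmul : μ[fun ω => r (X ω) * Z ω|MeasurableSpace.comap X inferInstance] =ᵐ[μ] fun ω => r (X ω) * (μ[Z|MeasurableSpace.comap X inferInstance]) ω :=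
      condExp_mul_of_stronglyMeasurable_left ((hr.comp hXm).stronglyMeasurable) hrXint hZ
    calc ∫ ω, r (X ω) * Z ω ∂μ
        = ∫ ω, (μ[fun ω => r (X ω) * Z ω|MeasurableSpace.comap X inferInstance]) ω ∂μ := (integral_condExp hm).symm
      _ = ∫ ω, r (X ω) * (μ[Z|MeasurableSpace.comap X inferInstance]) ω ∂μ := integral_congr_ae hmul
      _ = ∫ ω, r (X ω) * R (X ω) ∂μ := by
          refine integral_congr_ae ?_
          filter_upwards [hR] with ω e; rw [e]
  -- integrability of F1, F2 pieces
  have hF1a : Integrable (fun ω => rh (X ω) * Rfhat (X ω)) μ := by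
    refine hRfXint.abs.mono' ((hrh_m.comp hX).aestronglyMeasurable.mul hRfXint.1)
      (ae_of_all _ fun ω => ?_)
    simp only [Real.norm_eq_abs, abs_mul]
    rcases hrh01 (X ω) with h | h <;> simp [h, abs_nonneg]
  have hF2a : Integrable (fun ω => rs (X ω) * Rstar (X ω)) μ := by
    refine hRsXint.abs.mono' ((hrs_m.comp hX).aestronglyMeasurable.mul hRsXint.1)
      (ae_of_all _ fun ω => ?_)
    simp only [Real.norm_eq_abs, abs_mul]
    rcases hrs01 (X ω) with h | h <;> simp [h, abs_nonneg]
  have hF1b : Integrable (fun ω => (1 - rh (X ω)) * c) μ := by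
    refine (integrable_const c).mono' (((measurable_const.sub
      (hrh_m.comp hX)).mul measurable_const).aestronglyMeasurable) (ae_of_all _ fun ω => ?_)
    simp only [Real.norm_eq_abs, abs_mul]
    rcases hrh01 (X ω) with h | h <;> simp [h, abs_of_pos hc, hc.le]
  have hF2b : Integrable (fun ω => (1 - rs (X ω)) * c) μ := by
    refine (integrable_const c).mono' (((measurable_const.sub
      (hrs_m.comp hX)).mul measurable_const).aestronglyMeasurable) (ae_of_all _ fun ω => ?_)
    simp only [Real.norm_eq_abs, abs_mul]
    rcases hrs01 (X ω) with h | h <;> simp [h, abs_of_pos hc, hc.le]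
  have hZfrint : Integrable (fun ω => rh (X ω) * Zf ω) μ := by
    refine hfhat2.abs.mono' ((hrh_m.comp hX).aestronglyMeasurable.mul hfhat2.1)
      (ae_of_all _ fun ω => ?_)
    simp only [Real.norm_eq_abs, abs_mul]
    rcases hrh01 (X ω) with h | h <;> simp [h, abs_nonneg]
  have hZsrint : Integrable (fun ω => rs (X ω) * Zs ω) μ := by
    refine hfstar2.abs.mono' ((hrs_m.comp hX).aestronglyMeasurable.mul hfstar2.1)
      (ae_of_all _ fun ω => ?_)
    simp only [Real.norm_eq_abs, abs_mul]
    rcases hrs01 (X ω) with h | h <;> simp [h, abs_nonneg]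
  -- rewrite the two losses
  have hL1 : LRwR μ X Y c fhat rh
      = ∫ ω, (rh (X ω) * Rfhat (X ω) + (1 - rh (X ω)) * c) ∂μ := by
    have e1 : LRwR μ X Y c fhat rh
        = ∫ ω, (rh (X ω) * Zf ω + (1 - rh (X ω)) * c) ∂μ := rfl
    rw [e1, integral_add hZfrint hF1b,
      key rh hrh_m hrh01 Zf hfhat2 Rfhat hRfhat', ← integral_add hF1a hF1b]
  have hL2 : LRwR μ X Y c fstar rs
      = ∫ ω, (rs (X ω) * Rstar (X ω) + (1 - rs (X ω)) * c) ∂μ := by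
    have e2 : LRwR μ X Y c fstar rs
        = ∫ ω, (rs (X ω) * Zs ω + (1 - rs (X ω)) * c) ∂μ := rfl
    rw [e2, integral_add hZsrint hF2b,
      key rs hrs_m hrs01 Zs hfstar2 Rstar hRstar', ← integral_add hF2a hF2b]
  have hFint1 : Integrable (fun ω => rh (X ω) * Rfhat (X ω) + (1 - rh (X ω)) * c) μ := by
    exact hF1a.add hF1b
  have hFint2 : Integrable (fun ω => rs (X ω) * Rstar (X ω) + (1 - rs (X ω)) * c) μ := by
    exact hF2a.add hF2b
  rw [hL1, hL2, ← integral_sub hFint1 hFint2]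
  have hmono : ∫ ω, ((rh (X ω) * Rfhat (X ω) + (1 - rh (X ω)) * c)
        - (rs (X ω) * Rstar (X ω) + (1 - rs (X ω)) * c)) ∂μ
      ≤ ∫ ω, ((Rfhat (X ω) - Rstar (X ω)) + |Rhat (X ω) - Rfhat (X ω)|) ∂μ := by
    refine integral_mono_ae (by exact hFint1.sub hFint2)
      (by exact (hRfXint.sub hRsXint).add hcal) ?_
    filter_upwards [hle] with ω hω
    simpa [hrh_def, hrs_def] using pointwise_rwr_ineq (A := Rfhat (X ω)) (B := Rhat (X ω))
      (S := Rstar (X ω)) (c := c) hω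
  refine hmono.trans ?_
  rw [integral_add (by exact hRfXint.sub hRsXint : Integrable (fun ω => Rfhat (X ω) - Rstar (X ω)) μ) hcal]
  have : ∫ ω, (Rfhat (X ω) - Rstar (X ω)) ∂μ = ∫ ω, (fhat (X ω) - fstar (X ω)) ^ 2 ∂μ := by
    rw [hint_diff]
  rw [this]
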